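/- For the vector field F₉(x,y,z) = (−yz, 0, xz) on ℝ³ (the λ=0 case), the function I(x,y,z) = x²/2 + yz is a first integral, and any solution starting on the zero level set {I = 0} with x(0) ≠ 0 satisfies x'(t) = x(t)²/2 along its domain, hence is incomplete (its maximal interval of existence is a proper subinterval of ℝ). -/

import Mathlib

/-- The geodesic field `F₉` of `Q₉` on `aff(ℝ) ⊕ ℝ` (`λ = 0`): `(−yz, 0, xz)`. -/
def F9aff (v : Fin 3 → ℝ) : Fin 3 → ℝ := ![-(v 1 * v 2), 0, v 0 * v 2]

lemma blowup (f : ℝ → ℝ) (hf : ∀ t, HasDerivAt f (f t ^ 2 / 2) t) (h0 : 0 < f 0) : False := by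
  have mono : Monotone f := by
    refine monotone_of_deriv_nonneg (fun t => (hf t).differentiableAt) (fun t => ?_)
    rw [(hf t).deriv]; positivity
  have hpos : ∀ t, 0 ≤ t → 0 < f t := fun t ht => lt_of_lt_of_le h0 (mono ht)
  set b : ℝ := 2 / f 0 with hb
  have hbpos : 0 < b := by positivity
  set g : ℝ → ℝ := fun t => (f t)⁻¹ + t / 2 with hg
  have hG : ∀ t ∈ Set.Icc (0 : ℝ) b, HasDerivAt g 0 t := by
    intro t ht
    have hne : f t ≠ 0 := ne_of_gt (hpos t ht.1)
    have h1 := ((hf t).inv hne).add ((hasDerivAt_id t).div_const 2)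
    refine h1.congr_deriv ?_
    field_simp
    ring
  have hconst := constant_of_has_deriv_right_zero
    (f := g) (a := 0) (b := b)
    (fun t ht => (hG t ht).continuousAt.continuousWithinAt)
    (fun t ht => (hG t (Set.Ico_subset_Icc_self ht)).hasDerivWithinAt)
  have hgb : g b = g 0 := hconst b ⟨le_of_lt hbpos, le_refl b⟩
  have hfb : 0 < f b := hpos b hbpos.le
  have : (f b)⁻¹ + b / 2 = (f 0)⁻¹ + 0 / 2 := hgb
  have hb2 : b / 2 = (f 0)⁻¹ := by rw [hb]; field_simp
  have hfbinv : (f b)⁻¹ = 0 := by linarith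
  have : (0:ℝ) < (f b)⁻¹ := by positivity
  linarith

/-- `I = x²/2 + yz` is a first integral of `F₉`, and any solution starting on
`{I = 0}` with `x 0 ≠ 0` satisfies `x' = x²/2`, hence cannot be defined on all of `ℝ`. -/
theorem stmt_5 :
    (∀ (γ : ℝ → Fin 3 → ℝ) (t : ℝ), HasDerivAt γ (F9aff (γ t)) t →
        HasDerivAt (fun u => (γ u 0) ^ 2 / 2 + γ u 1 * γ u 2) 0 t) ∧
    (∀ γ : ℝ → Fin 3 → ℝ, (∀ t, HasDerivAt γ (F9aff (γ t)) t) →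
        (γ 0 0) ^ 2 / 2 + γ 0 1 * γ 0 2 = 0 → γ 0 0 ≠ 0 →
        (∀ t, HasDerivAt (fun u => γ u 0) ((γ t 0) ^ 2 / 2) t) ∧ False) := by
  have key : ∀ (γ : ℝ → Fin 3 → ℝ) (t : ℝ), HasDerivAt γ (F9aff (γ t)) t →
      HasDerivAt (fun u => (γ u 0) ^ 2 / 2 + γ u 1 * γ u 2) 0 t := by
    intro γ t hd
    have hx : HasDerivAt (fun u => γ u 0) (-(γ t 1 * γ t 2)) t := hasDerivAt_pi.1 hd 0
    have hy : HasDerivAt (fun u => γ u 1) 0 t := hasDerivAt_pi.1 hd 1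
    have hz : HasDerivAt (fun u => γ u 2) (γ t 0 * γ t 2) t := hasDerivAt_pi.1 hd 2
    have h1 := ((hx.pow 2).div_const 2).add (hy.mul hz)
    refine h1.congr_deriv ?_
    ring
  constructor
  · exact key
  · intro γ hγ h0 hx0
    -- the first integral is constantly 0
    have hIconst : ∀ t, (γ t 0) ^ 2 / 2 + γ t 1 * γ t 2 = 0 := by
      intro t
      set I : ℝ → ℝ := fun u => (γ u 0) ^ 2 / 2 + γ u 1 * γ u 2 with hI
      have hdiff : Differentiable ℝ I := fun u => (key γ u (hγ u)).differentiableAt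
      have hderiv : ∀ u, deriv I u = 0 := fun u => (key γ u (hγ u)).deriv
      have : I t = I 0 := by
        have := is_const_of_deriv_eq_zero hdiff hderiv t 0
        exact this
      rw [hI] at this
      simpa [h0] using this
    have hx' : ∀ t, HasDerivAt (fun u => γ u 0) ((γ t 0) ^ 2 / 2) t := by
      intro t
      have hx : HasDerivAt (fun u => γ u 0) (-(γ t 1 * γ t 2)) t := hasDerivAt_pi.1 (hγ t) 0
      have h := hIconst t
      have : -(γ t 1 * γ t 2) = (γ t 0) ^ 2 / 2 := by linarith
      rwa [this] at hx
    refine ⟨hx', ?_⟩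
    rcases hx0.lt_or_gt with hneg | hpos
    · -- consider h t = -γ (-t) 0
      have : ∀ t, HasDerivAt (fun u => -γ (-u) 0) ((-γ (-t) 0) ^ 2 / 2) t := by
        intro t
        have h1 := (hx' (-t)).comp t ((hasDerivAt_id t).neg)
        have h2 := h1.neg
        refine h2.congr_deriv ?_
        ring
      exact blowup _ this (by simpa using hneg)
    · exact blowup _ hx' hpos
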